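/- Let G be a finite group, Z ≤ Z(G), and P a p-subgroup of G such that N_G(P)/Z = N_{G/Z}(PZ/Z) (i.e. the image of N_G(P) in G/Z is the full normalizer of the image of P). Then P is a radical p-subgroup of G if and only if PZ/Z is a radical p-subgroup of G/Z, provided O_p(Z) ≤ P. -/

import Mathlib

open Pointwise


/-- The subgroup of `G` generated by all subgroups of `N` that are `p`-groups and
are normalized by `N`, i.e. `O_p(N)`, the largest normal `p`-subgroup of `N`. -/
def relPCore (p : ℕ) {G : Type*} [Group G] (N : Subgroup G) : Subgroup G :=
  sSup {Q : Subgroup G | Q ≤ N ∧ IsPGroup p Q ∧ ∀ n ∈ N, ∀ x ∈ Q, n * x * n⁻¹ ∈ Q}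

/-- Let `Z ≤ Z(G)`, and `P` a `p`-subgroup of `G` with `O_p(Z) ≤ P`, such that the image
of `N_G(P)` in `G/Z` is the full normalizer of the image of `P`. Then `P` is a radical
`p`-subgroup of `G` if and only if its image `PZ/Z` is a radical `p`-subgroup of `G/Z`. -/
theorem stmt5 {G : Type*} [Group G] [Finite G] (p : ℕ) (hp : p.Prime)
    (Z : Subgroup G) [Z.Normal] (hZ : Z ≤ Subgroup.center G)
    (P : Subgroup G) (hP : IsPGroup p P)
    (hOpZ : ∀ z ∈ Z, (∃ n : ℕ, orderOf z = p ^ n) → z ∈ P)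
    (hmap : Subgroup.map (QuotientGroup.mk' Z) (Subgroup.normalizer (P : Set G)) =
      Subgroup.normalizer ((Subgroup.map (QuotientGroup.mk' Z) P : Subgroup (G ⧸ Z)) : Set (G ⧸ Z))) :
    relPCore p (Subgroup.normalizer (P : Set G)) = P ↔
      relPCore p (Subgroup.normalizer ((Subgroup.map (QuotientGroup.mk' Z) P : Subgroup (G ⧸ Z)) : Set (G ⧸ Z))) =
        Subgroup.map (QuotientGroup.mk' Z) P := by
  haveI : Fact p.Prime := ⟨hp⟩
  set φ := QuotientGroup.mk' Z with hφdef
  have hφsurj : Function.Surjective φ := QuotientGroup.mk'_surjective Z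
  set N := Subgroup.normalizer (P : Set G) with hNdef
  set Pb := P.map φ with hPbdef
  set Nb := Subgroup.normalizer (Pb : Set (G ⧸ Z)) with hNbdef
  have hZN : Z ≤ N := le_trans hZ (Subgroup.center_le_normalizer _)
  have hker : φ.ker = Z := QuotientGroup.ker_mk' Z
  have hcomapN : Nb.comap φ = N := by
    rw [← hmap, Subgroup.comap_map_eq, hker, sup_eq_left.mpr hZN]
  have hPmem : P ∈ {Q : Subgroup G | Q ≤ N ∧ IsPGroup p Q ∧
      ∀ n ∈ N, ∀ x ∈ Q, n * x * n⁻¹ ∈ Q} :=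
    ⟨Subgroup.le_normalizer, hP, fun n hn x hx => (Subgroup.mem_normalizer_iff.mp hn x).mp hx⟩
  have hPbmem : Pb ∈ {Q : Subgroup (G ⧸ Z) | Q ≤ Nb ∧ IsPGroup p Q ∧
      ∀ n ∈ Nb, ∀ x ∈ Q, n * x * n⁻¹ ∈ Q} :=
    ⟨Subgroup.le_normalizer, hP.map φ,
      fun n hn x hx => (Subgroup.mem_normalizer_iff.mp hn x).mp hx⟩
  constructor
  · -- hard direction: radical downstairs implies radical upstairs
    intro h
    refine le_antisymm (sSup_le ?_) (le_sSup hPbmem)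
    rintro Qb ⟨hQ1, hQ2, hQ3⟩
    set Q' : Subgroup G := Qb.comap φ with hQ'def
    have hQ'N : Q' ≤ N := hcomapN ▸ Subgroup.comap_mono hQ1
    have hQ'conj : ∀ n ∈ N, ∀ x ∈ Q', n * x * n⁻¹ ∈ Q' := by
      intro n hn x hx
      have hn' : φ n ∈ Nb := hmap ▸ Subgroup.mem_map_of_mem φ hn
      have := hQ3 (φ n) hn' (φ x) hx
      simpa [hQ'def, Subgroup.mem_comap] using this
    -- Q' is nilpotent
    have hnil : Group.IsNilpotent Q' := by
      let f : Q' →* Qb := (φ.domRestrict Q').codRestrict Qb (fun x => x.2)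
      refine @isNilpotent_of_ker_le_center _ _ _ _ f ?_ ?_
      · intro x hx
        have hxZ : (x : G) ∈ Z := by
          have h1 : φ (x : G) = 1 := congrArg Subtype.val (hx : f x = 1)
          exact (QuotientGroup.eq_one_iff _).mp h1
        rw [Subgroup.mem_center_iff]
        intro g
        ext
        simp only [Subgroup.coe_mul]
        exact Subgroup.mem_center_iff.mp (hZ hxZ) (g : G)
      · exact (IsPGroup.of_equiv hQ2 (MulEquiv.refl _)).isNilpotent
    obtain ⟨S⟩ : Nonempty (Sylow p Q') := inferInstance
    have hSnormal : (S : Subgroup Q').Normal := by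
      have h34 := (isNilpotent_of_finite_tfae (G := Q')).out 0 3
      exact h34.mp hnil p ⟨hp⟩ S
    haveI : Unique (Sylow p Q') := Sylow.unique_of_normal S hSnormal
    set Sg : Subgroup G := (S : Subgroup Q').map Q'.subtype with hSgdef
    have hSgQ' : Sg ≤ Q' := Subgroup.map_subtype_le _
    have hkey : ∀ T : Subgroup G, IsPGroup p T → T ≤ Q' → T ≤ Sg := by
      intro T hT hTQ
      have h1 : IsPGroup p (T.subgroupOf Q') :=
        IsPGroup.of_equiv hT (Subgroup.subgroupOfEquivOfLe hTQ).symm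
      obtain ⟨S', hS'⟩ := h1.exists_le_sylow
      have hSS : S' = S := Subsingleton.elim _ _
      rw [hSS] at hS'
      intro x hx
      exact ⟨⟨x, hTQ hx⟩, hS' (Subgroup.mem_subgroupOf.mpr hx), rfl⟩
    have hSgmem : Sg ∈ {Q : Subgroup G | Q ≤ N ∧ IsPGroup p Q ∧
        ∀ n ∈ N, ∀ x ∈ Q, n * x * n⁻¹ ∈ Q} := by
      refine ⟨hSgQ'.trans hQ'N, S.isPGroup'.map _, ?_⟩
      intro n hn x hx
      have hT : IsPGroup p (Sg.map (MulAut.conj n).toMonoidHom) :=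
        (S.isPGroup'.map _).map _
      have hTQ : Sg.map (MulAut.conj n).toMonoidHom ≤ Q' := by
        rintro _ ⟨y, hy, rfl⟩
        simpa using hQ'conj n hn y (hSgQ' hy)
      refine hkey _ hT hTQ ?_
      exact ⟨x, hx, by simp⟩
    have hSgP : Sg ≤ P := h ▸ le_sSup hSgmem
    -- now show Qb ≤ Pb elementwise
    intro qb hqb
    obtain ⟨q, rfl⟩ := hφsurj qb
    have hqQ' : q ∈ Q' := by simpa [hQ'def, Subgroup.mem_comap] using hqb
    set n0 := orderOf q with hn0def
    have hn0 : n0 ≠ 0 := (orderOf_pos q).ne'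
    set a := n0.factorization p with hadef
    set m := ordCompl[p] n0 with hmdef
    have hsplit : p ^ a * m = n0 := Nat.ordProj_mul_ordCompl_eq_self n0 p
    have hpm : ¬ p ∣ m := Nat.not_dvd_ordCompl hp hn0
    have hcopm : Nat.Coprime p m := hp.coprime_iff_not_dvd.mpr hpm
    have h1 : (φ q) ^ (p ^ a) = 1 := by
      obtain ⟨b, hb⟩ := IsPGroup.iff_orderOf.mp hQ2 (⟨φ q, hqb⟩ : Qb)
      have hbq : orderOf (φ q) = p ^ b := by
        rw [← hb]
        exact orderOf_injective Qb.subtype Subtype.coe_injective ⟨φ q, hqb⟩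
      apply orderOf_dvd_iff_pow_eq_one.mp
      rw [hbq]
      have hdvd : p ^ b ∣ n0 := hbq ▸ orderOf_map_dvd φ q
      rw [← hsplit] at hdvd
      exact (hcopm.pow_left b).dvd_of_dvd_mul_right hdvd
    have hv : (φ q) ^ m ∈ Pb := by
      have hqm : q ^ m ∈ Q' := pow_mem hqQ' m
      have hord : (q ^ m) ^ (p ^ a) = 1 := by
        rw [← pow_mul, mul_comm, hsplit, hn0def, pow_orderOf_eq_one]
      have hT : IsPGroup p (Subgroup.zpowers (q ^ m)) := by
        intro g
        refine ⟨a, ?_⟩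
        obtain ⟨j, hj⟩ := g.2
        ext
        push_cast
        rw [← hj, ← zpow_natCast, ← zpow_mul, mul_comm j, zpow_mul, zpow_natCast, hord, one_zpow]
      have hle : Subgroup.zpowers (q ^ m) ≤ Q' := by
        rintro x ⟨j, rfl⟩
        exact zpow_mem hqm j
      have : q ^ m ∈ P := hSgP (hkey _ hT hle (Subgroup.mem_zpowers _))
      rw [← map_pow]
      exact Subgroup.mem_map_of_mem φ this
    obtain ⟨c, d, hcd⟩ := ((hcopm.pow_left a).isCoprime : IsCoprime ((p ^ a : ℕ) : ℤ) (m : ℤ))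
    have key : φ q = ((φ q) ^ (p ^ a)) ^ c * ((φ q) ^ m) ^ d := by
      calc φ q = (φ q) ^ (1 : ℤ) := (zpow_one _).symm
        _ = (φ q) ^ (c * ((p ^ a : ℕ) : ℤ) + d * ((m : ℕ) : ℤ)) := by rw [hcd]
        _ = ((φ q) ^ (p ^ a)) ^ c * ((φ q) ^ m) ^ d := by
            rw [zpow_add, mul_comm c, mul_comm d, zpow_mul, zpow_mul, zpow_natCast, zpow_natCast]
    rw [key, h1, one_zpow, one_mul]
    exact Subgroup.zpow_mem Pb hv d
  · -- easy direction
    intro h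
    refine le_antisymm (sSup_le ?_) (le_sSup hPmem)
    rintro Q ⟨hQ1, hQ2, hQ3⟩
    have hmem : Q.map φ ∈ {Q : Subgroup (G ⧸ Z) | Q ≤ Nb ∧ IsPGroup p Q ∧
        ∀ n ∈ Nb, ∀ x ∈ Q, n * x * n⁻¹ ∈ Q} := by
      refine ⟨hmap ▸ Subgroup.map_mono hQ1, hQ2.map φ, ?_⟩
      intro nb hnb xb hxb
      rw [← hmap] at hnb
      obtain ⟨n, hn, rfl⟩ := hnb
      obtain ⟨x, hx, rfl⟩ := hxb
      exact ⟨n * x * n⁻¹, hQ3 n hn x hx, by simp⟩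
    have hQP : Q.map φ ≤ Pb := h ▸ le_sSup hmem
    have hQPZ : Q ≤ P ⊔ Z := by
      have h2 := Subgroup.map_le_iff_le_comap.mp hQP
      rwa [Subgroup.comap_map_eq, hker] at h2
    have hR : IsPGroup p ((P ⊔ Q : Subgroup G)) := hP.to_sup_of_normal_left' hQ2 hQ1
    intro q hq
    have hq' : q ∈ ((P : Set G) * (Z : Set G)) := by
      have hq2 : q ∈ ((P ⊔ Z : Subgroup G) : Set G) := hQPZ hq
      rwa [Subgroup.mul_normal P Z] at hq2
    obtain ⟨x, hx, z, hz, rfl⟩ := hq'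
    have hzR : z ∈ P ⊔ Q := by
      have : z = x⁻¹ * (x * z) := by group
      rw [this]
      exact mul_mem (inv_mem (Subgroup.mem_sup_left hx)) (Subgroup.mem_sup_right hq)
    have hzP : z ∈ P := by
      obtain ⟨k, hk⟩ := IsPGroup.iff_orderOf.mp hR (⟨z, hzR⟩ : (P ⊔ Q : Subgroup G))
      refine hOpZ z hz ⟨k, ?_⟩
      rw [← hk]
      exact orderOf_injective (P ⊔ Q : Subgroup G).subtype Subtype.coe_injective ⟨z, hzR⟩
    exact mul_mem hx hzP
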